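/- Let G be a Gauss diagram that can be transformed by a finite sequence of crossing changes into a Gauss diagram G' whose writhe polynomial vanishes, W_{G'}(t) = 0. Then (1/2)·∑_{k ∈ ℤ∖{0}} |J_k(G)| = ∑_{k > 0} |J_k(G)| = ∑_{k < 0} |J_k(G)|. -/

import Mathlib

open scoped Classical

/-- A Gauss diagram with `n` chords: the `2n` marked points live on the cyclic group
`ZMod (2*n)` (the oriented circle); each chord `i` is the ordered pair
`(tail i, head i)` of marked points and carries a sign (writhe) `sign i ∈ {+1, -1}`;
all `2n` endpoints are distinct. -/
structure GaussDiagram (n : ℕ) where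
  tail : Fin n → ZMod (2 * n)
  head : Fin n → ZMod (2 * n)
  sign : Fin n → ℤ
  sign_mem : ∀ i, sign i = 1 ∨ sign i = -1
  endpoints_inj : Function.Injective
    (fun p : Fin n × Bool => if p.2 then head p.1 else tail p.1)

namespace GaussDiagram

variable {n : ℕ}

/-- `x` lies on the open arc running in the circle's orientation from `a` to `b`. -/
def arcMem (a b x : ZMod (2 * n)) : Prop :=
  0 < (x - a).val ∧ (x - a).val < (b - a).val

/-- `x` lies on the open oriented arc from the tail to the head of chord `i`. -/
def inArc (G : GaussDiagram n) (i : Fin n) (x : ZMod (2 * n)) : Prop :=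
  arcMem (G.tail i) (G.head i) x

/-- Chords `i` and `j` are linked: exactly one endpoint of `j` lies on the open
oriented arc from the tail to the head of `i`. -/
def linked (G : GaussDiagram n) (i j : Fin n) : Prop :=
  Xor' (G.inArc i (G.tail j)) (G.inArc i (G.head j))

/-- Chord `j` crosses chord `i` from right to left. -/
def crossesRL (G : GaussDiagram n) (i j : Fin n) : Prop :=
  G.linked i j ∧ G.inArc i (G.head j)

/-- Chord `j` crosses chord `i` from left to right. -/
def crossesLR (G : GaussDiagram n) (i j : Fin n) : Prop :=
  G.linked i j ∧ G.inArc i (G.tail j)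

/-- The index of the chord `i`: `Ind(i) = r₊ − r₋ − l₊ + l₋`. -/
noncomputable def ind (G : GaussDiagram n) (i : Fin n) : ℤ :=
  ((Finset.univ.filter fun j => G.crossesRL i j ∧ G.sign j = 1).card : ℤ)
    - ((Finset.univ.filter fun j => G.crossesRL i j ∧ G.sign j = -1).card : ℤ)
    - ((Finset.univ.filter fun j => G.crossesLR i j ∧ G.sign j = 1).card : ℤ)
    + ((Finset.univ.filter fun j => G.crossesLR i j ∧ G.sign j = -1).card : ℤ)

/-- The `k`-th writhe `J_k(G)`: the number of positive chords of index `k` minus the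
number of negative chords of index `k`. -/
noncomputable def J (G : GaussDiagram n) (k : ℤ) : ℤ :=
  ((Finset.univ.filter fun i => G.ind i = k ∧ G.sign i = 1).card : ℤ)
    - ((Finset.univ.filter fun i => G.ind i = k ∧ G.sign i = -1).card : ℤ)

/-- The writhe polynomial `W_G(t) = ∑_{Ind(c) ≠ 0} w(c) t^{Ind(c)} = ∑_{k ≠ 0} J_k(G) t^k`. -/
noncomputable def writhePoly (G : GaussDiagram n) : LaurentPolynomial ℤ :=
  ∑ i ∈ Finset.univ.filter (fun i => G.ind i ≠ 0),
    LaurentPolynomial.C (G.sign i) * LaurentPolynomial.T (G.ind i)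

/-- The odd writhe `J(G) = ∑_{c ∈ Odd(G)} w(c)`. -/
noncomputable def oddWrithe (G : GaussDiagram n) : ℤ :=
  ∑ i ∈ Finset.univ.filter (fun i => Odd (G.ind i)), G.sign i

/-- `G'` is obtained from `G` by a crossing change at the chord `c`: the tail and head
of `c` are interchanged and its sign is negated, all other chords being unchanged. -/
def IsCrossingChangeAt (G G' : GaussDiagram n) (c : Fin n) : Prop :=
  G'.tail c = G.head c ∧ G'.head c = G.tail c ∧ G'.sign c = -G.sign c ∧
    ∀ j : Fin n, j ≠ c →
      G'.tail j = G.tail j ∧ G'.head j = G.head j ∧ G'.sign j = G.sign j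

/-- `G'` is obtained from `G` by a crossing change (at some chord). -/
def IsCrossingChange (G G' : GaussDiagram n) : Prop :=
  ∃ c, IsCrossingChangeAt G G' c

/-- `G'` is obtained from `G` by a sequence of `m` crossing changes. -/
def ChangedBy (m : ℕ) (G G' : GaussDiagram n) : Prop :=
  ∃ f : ℕ → GaussDiagram n, f 0 = G ∧ f m = G' ∧
    ∀ i < m, IsCrossingChange (f i) (f (i + 1))

/-! ### Auxiliary lemmas -/

section Aux

variable {n : ℕ}

private lemma val_arc {N : ℕ} [NeZero N] {u v : ZMod N} (hu : u ≠ 0) (hv : v ≠ 0)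
    (huv : u ≠ v) :
    (0 < u.val ∧ u.val < v.val) ↔ ¬(0 < (u - v).val ∧ (u - v).val < (-v).val) := by
  have hN : 0 < N := Nat.pos_of_ne_zero (NeZero.ne N)
  have hA : u.val < N := ZMod.val_lt u
  have hB : v.val < N := ZMod.val_lt v
  have hA0 : u.val ≠ 0 := fun h => hu ((ZMod.val_eq_zero u).1 h)
  have hB0 : v.val ≠ 0 := fun h => hv ((ZMod.val_eq_zero v).1 h)
  have hAB : u.val ≠ v.val := fun h => huv (ZMod.val_injective N h)
  have hneg : (-v).val = N - v.val := by
    rw [ZMod.neg_val]; simp [hv]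
  have hsub : (u - v).val = (u.val + (N - v.val)) % N := by
    rw [sub_eq_add_neg, ZMod.val_add, hneg]
  rcases lt_or_ge (u.val + (N - v.val)) N with h | h
  · rw [hsub, hneg, Nat.mod_eq_of_lt h]
    omega
  · have hmod : (u.val + (N - v.val)) % N = u.val - v.val := by
      rw [Nat.mod_eq_sub_mod h,
        (by omega : u.val + (N - v.val) - N = u.val - v.val),
        Nat.mod_eq_of_lt (by omega)]
    rw [hsub, hneg, hmod]
    omega

private lemma arcMem_not [NeZero (2 * n)] {a b x : ZMod (2 * n)} (hab : a ≠ b)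
    (hxa : x ≠ a) (hxb : x ≠ b) :
    arcMem a b x ↔ ¬ arcMem b a x := by
  have hu : x - a ≠ 0 := sub_ne_zero.2 hxa
  have hv : b - a ≠ 0 := sub_ne_zero.2 (Ne.symm hab)
  have huv : x - a ≠ b - a := fun h => hxb (by simpa [sub_left_inj] using h)
  have := val_arc hu hv huv
  simpa [arcMem, show x - a - (b - a) = x - b by ring, show -(b - a) = a - b by ring]
    using this

private lemma sum_ite_sign (G : GaussDiagram n) (p : Fin n → Prop) :
    (∑ j : Fin n, if p j then G.sign j else 0)
      = ((Finset.univ.filter fun j => p j ∧ G.sign j = 1).card : ℤ)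
        - ((Finset.univ.filter fun j => p j ∧ G.sign j = -1).card : ℤ) := by
  have h : ∀ j, (if p j then G.sign j else 0)
      = (if p j ∧ G.sign j = 1 then (1 : ℤ) else 0)
        - (if p j ∧ G.sign j = -1 then (1 : ℤ) else 0) := by
    intro j
    rcases G.sign_mem j with h | h <;> by_cases hp : p j <;> simp [h, hp]
  simp_rw [h]
  rw [Finset.sum_sub_distrib]
  simp [Finset.sum_boole]

private lemma J_eq_sum (G : GaussDiagram n) (k : ℤ) :
    G.J k = ∑ i : Fin n, if G.ind i = k then G.sign i else 0 := by
  have h := sum_ite_sign G (fun i => G.ind i = k)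
  unfold GaussDiagram.J
  convert h.symm using 2 <;>
    first
      | (exact Finset.sum_congr rfl fun x _ => by split_ifs <;> rfl)
      | congr

private lemma ind_eq_sum (G : GaussDiagram n) (i : Fin n) :
    G.ind i = ∑ j : Fin n,
      ((if G.crossesRL i j then G.sign j else 0)
        - (if G.crossesLR i j then G.sign j else 0)) := by
  have h1 := sum_ite_sign G (fun j => G.crossesRL i j)
  have h2 := sum_ite_sign G (fun j => G.crossesLR i j)
  rw [Finset.sum_sub_distrib]
  unfold GaussDiagram.ind
  rw [show ((Finset.univ.filter fun j => G.crossesRL i j ∧ G.sign j = 1).card : ℤ)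
      - ((Finset.univ.filter fun j => G.crossesRL i j ∧ G.sign j = -1).card : ℤ)
      - ((Finset.univ.filter fun j => G.crossesLR i j ∧ G.sign j = 1).card : ℤ)
      + ((Finset.univ.filter fun j => G.crossesLR i j ∧ G.sign j = -1).card : ℤ)
      = (((Finset.univ.filter fun j => G.crossesRL i j ∧ G.sign j = 1).card : ℤ)
      - ((Finset.univ.filter fun j => G.crossesRL i j ∧ G.sign j = -1).card : ℤ))
      - (((Finset.univ.filter fun j => G.crossesLR i j ∧ G.sign j = 1).card : ℤ)
      - ((Finset.univ.filter fun j => G.crossesLR i j ∧ G.sign j = -1).card : ℤ)) by ring,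
    ← h1, ← h2]

private lemma tail_ne_head (G : GaussDiagram n) (i j : Fin n) : G.tail i ≠ G.head j := by
  intro h
  have := G.endpoints_inj (a₁ := (i, false)) (a₂ := (j, true)) (by simpa using h)
  simp at this

private lemma tail_inj (G : GaussDiagram n) {i j : Fin n} (h : G.tail i = G.tail j) :
    i = j := by
  have := G.endpoints_inj (a₁ := (i, false)) (a₂ := (j, false)) (by simpa using h)
  simpa using this

private lemma head_inj (G : GaussDiagram n) {i j : Fin n} (h : G.head i = G.head j) :
    i = j := by
  have := G.endpoints_inj (a₁ := (i, true)) (a₂ := (j, true)) (by simpa using h)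
  simpa using this

private lemma not_linked_self (G : GaussDiagram n) (c : Fin n) : ¬ G.linked c c := by
  have h1 : ¬ G.inArc c (G.tail c) := by simp [GaussDiagram.inArc, arcMem]
  have h2 : ¬ G.inArc c (G.head c) := by simp [GaussDiagram.inArc, arcMem]
  intro h
  unfold GaussDiagram.linked Xor' Xor at h
  tauto

/-- The per-chord contribution to the index. -/
private noncomputable def term (G : GaussDiagram n) (i j : Fin n) : ℤ :=
  (if G.crossesRL i j then G.sign j else 0) - (if G.crossesLR i j then G.sign j else 0)

section Change

variable {G G' : GaussDiagram n} {c : Fin n} (hc : G.IsCrossingChangeAt G' c)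

include hc

private lemma inArc_other {j : Fin n} (hj : j ≠ c) (x : ZMod (2 * n)) :
    G'.inArc j x ↔ G.inArc j x := by
  obtain ⟨-, -, -, h⟩ := hc
  obtain ⟨ht, hh, -⟩ := h j hj
  simp [GaussDiagram.inArc, ht, hh]

private lemma inArc_c (x : ZMod (2 * n)) :
    G'.inArc c x ↔ arcMem (G.head c) (G.tail c) x := by
  obtain ⟨ht, hh, -, -⟩ := hc
  simp [GaussDiagram.inArc, ht, hh]

private lemma inArc_c_not {x : ZMod (2 * n)} (hxt : x ≠ G.tail c) (hxh : x ≠ G.head c) :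
    G'.inArc c x ↔ ¬ G.inArc c x := by
  haveI : NeZero (2 * n) := ⟨by have := c.pos; omega⟩
  rw [inArc_c hc]
  have hth : G.tail c ≠ G.head c := tail_ne_head G c c
  have := arcMem_not (a := G.tail c) (b := G.head c) (x := x) hth hxt hxh
  unfold GaussDiagram.inArc
  tauto

private lemma term_other_other {i j : Fin n} (hi : i ≠ c) (hj : j ≠ c) :
    term G' i j = term G i j := by
  have h := hc.2.2.2
  have hs := (h j hj).2.2
  have h1 : ∀ x, G'.inArc i x ↔ G.inArc i x := inArc_other hc hi
  have h2 : G'.linked i j ↔ G.linked i j := by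
    unfold GaussDiagram.linked
    obtain ⟨htj, hhj, -⟩ := h j hj
    rw [htj, hhj, h1, h1]
  have h3 : G'.crossesRL i j ↔ G.crossesRL i j := by
    unfold GaussDiagram.crossesRL
    rw [h2, (h j hj).2.1, h1]
  have h4 : G'.crossesLR i j ↔ G.crossesLR i j := by
    unfold GaussDiagram.crossesLR
    rw [h2, (h j hj).1, h1]
  simp [term, h3, h4, hs]

private lemma term_other_c {i : Fin n} (hi : i ≠ c) :
    term G' i c = term G i c := by
  obtain ⟨ht, hh, hs, -⟩ := id hc
  have h1 : ∀ x, G'.inArc i x ↔ G.inArc i x := inArc_other hc hi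
  have h2 : G'.linked i c ↔ G.linked i c := by
    unfold GaussDiagram.linked
    rw [ht, hh, h1, h1]; unfold Xor'; rw [xor_comm]
  have h3 : G'.crossesRL i c ↔ G.crossesLR i c := by
    unfold GaussDiagram.crossesRL GaussDiagram.crossesLR
    rw [h2, hh, h1]
  have h4 : G'.crossesLR i c ↔ G.crossesRL i c := by
    unfold GaussDiagram.crossesLR GaussDiagram.crossesRL
    rw [h2, ht, h1]
  simp only [term, h3, h4, hs]
  by_cases hRL : G.crossesRL i c <;> by_cases hLR : G.crossesLR i c <;> simp [hRL, hLR]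

private lemma ind_other {i : Fin n} (hi : i ≠ c) : G'.ind i = G.ind i := by
  rw [ind_eq_sum, ind_eq_sum]
  apply Finset.sum_congr rfl
  intro j _
  by_cases hj : j = c
  · subst hj; exact term_other_c hc hi
  · exact term_other_other hc hi hj

private lemma term_c_other {j : Fin n} (hj : j ≠ c) :
    term G' c j = -term G c j := by
  obtain ⟨ht, hh, hs, h⟩ := id hc
  obtain ⟨htj, hhj, hsj⟩ := h j hj
  have hxt : G.tail j ≠ G.tail c := fun h' => hj (tail_inj G h')
  have hxh : G.tail j ≠ G.head c := tail_ne_head G j c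
  have hyt : G.head j ≠ G.tail c := fun h' => (tail_ne_head G c j) h'.symm
  have hyh : G.head j ≠ G.head c := fun h' => hj (head_inj G h')
  have e1 : G'.inArc c (G.tail j) ↔ ¬ G.inArc c (G.tail j) := inArc_c_not hc hxt hxh
  have e2 : G'.inArc c (G.head j) ↔ ¬ G.inArc c (G.head j) := inArc_c_not hc hyt hyh
  have hlink : G'.linked c j ↔ G.linked c j := by
    unfold GaussDiagram.linked Xor' at *
    rw [htj, hhj, e1, e2]
    unfold Xor
    tauto
  have h3 : G'.crossesRL c j ↔ G.crossesLR c j := by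
    unfold GaussDiagram.crossesRL GaussDiagram.crossesLR at *
    rw [hhj, e2, hlink]
    unfold GaussDiagram.linked Xor' Xor
    tauto
  have h4 : G'.crossesLR c j ↔ G.crossesRL c j := by
    unfold GaussDiagram.crossesLR GaussDiagram.crossesRL at *
    rw [htj, e1, hlink]
    unfold GaussDiagram.linked Xor' Xor
    tauto
  simp only [term, h3, h4, hsj]
  by_cases hRL : G.crossesRL c j <;> by_cases hLR : G.crossesLR c j <;> simp [hRL, hLR] <;> ring

omit hc in
private lemma term_c_c : term G' c c = -term G c c := by
  have h1 : ¬ G'.linked c c := not_linked_self G' c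
  have h2 : ¬ G.linked c c := not_linked_self G c
  simp [term, GaussDiagram.crossesRL, GaussDiagram.crossesLR, h1, h2]

private lemma ind_c : G'.ind c = -G.ind c := by
  rw [ind_eq_sum, ind_eq_sum, ← Finset.sum_neg_distrib]
  apply Finset.sum_congr rfl
  intro j _
  by_cases hj : j = c
  · subst hj; exact term_c_c
  · exact term_c_other hc hj

private lemma J_change (k : ℤ) :
    G'.J k - G'.J (-k) = G.J k - G.J (-k) := by
  rw [J_eq_sum, J_eq_sum, J_eq_sum, J_eq_sum, ← Finset.sum_sub_distrib,
    ← Finset.sum_sub_distrib]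
  apply Finset.sum_congr rfl
  intro i _
  by_cases hi : i = c
  · subst hi
    have hs := hc.2.2.1
    rw [ind_c hc, hs]
    split_ifs <;> omega
  · have h := hc.2.2.2
    rw [ind_other hc hi, (h i hi).2.2]

end Change

private lemma J_invariant {m : ℕ} {G G' : GaussDiagram n} (h : GaussDiagram.ChangedBy m G G')
    (k : ℤ) : G.J k - G.J (-k) = G'.J k - G'.J (-k) := by
  obtain ⟨f, h0, hm, hstep⟩ := h
  have key : ∀ i ≤ m, (f 0).J k - (f 0).J (-k) = (f i).J k - (f i).J (-k) := by
    intro i hi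
    induction i with
    | zero => rfl
    | succ i ih =>
      obtain ⟨c, hcc⟩ := hstep i (by omega)
      rw [ih (by omega), ← J_change hcc k]
  rw [← h0, ← hm]
  exact key m le_rfl

private lemma J_zero_of_writhePoly_zero {G : GaussDiagram n} (h0 : G.writhePoly = 0)
    {k : ℤ} (hk : k ≠ 0) : G.J k = 0 := by
  have e : G.writhePoly = ∑ i ∈ Finset.univ.filter (fun i => G.ind i ≠ 0),
      AddMonoidAlgebra.single (G.ind i) (G.sign i) := by
    unfold GaussDiagram.writhePoly
    apply Finset.sum_congr rfl
    intro i _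
    exact (LaurentPolynomial.single_eq_C_mul_T (G.sign i) (G.ind i)).symm
  have s1 : G.J k = ∑ i ∈ Finset.univ.filter (fun i => G.ind i ≠ 0),
      if G.ind i = k then G.sign i else 0 := by
    rw [J_eq_sum]
    refine (Finset.sum_filter_of_ne ?_).symm
    intro x _ hx h'
    rw [h'] at hx
    rw [if_neg (by omega : ¬ (0 : ℤ) = k)] at hx
    exact hx rfl
  calc G.J k = ∑ i ∈ Finset.univ.filter (fun i => G.ind i ≠ 0),
        (AddMonoidAlgebra.single (G.ind i) (G.sign i) : LaurentPolynomial ℤ).coeff k := by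
        rw [s1]
        refine Finset.sum_congr rfl fun i _ => ?_
        rw [AddMonoidAlgebra.coeff_single, Finsupp.single_apply]
    _ = (∑ i ∈ Finset.univ.filter (fun i => G.ind i ≠ 0),
          (AddMonoidAlgebra.single (G.ind i) (G.sign i) : LaurentPolynomial ℤ)).coeff k := by
        rw [AddMonoidAlgebra.coeff_sum, Finsupp.finset_sum_apply]
    _ = G.writhePoly.coeff k := by rw [← e]
    _ = 0 := by rw [h0]; rfl

end Aux

end GaussDiagram

/-- if `G` can be transformed by a finite sequence of crossing changes into a
Gauss diagram `G'` with `W_{G'}(t) = 0`, then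
`(1/2)·∑_{k ≠ 0} |J_k(G)| = ∑_{k > 0} |J_k(G)| = ∑_{k < 0} |J_k(G)|`. -/
theorem sum_abs_J_halves {n : ℕ} (G G' : GaussDiagram n)
    (h : ∃ m : ℕ, GaussDiagram.ChangedBy m G G') (h0 : G'.writhePoly = 0) :
    (∑ᶠ (k : ℤ) (_ : k ≠ 0), |G.J k|) = 2 * ∑ᶠ (k : ℤ) (_ : 0 < k), |G.J k| ∧
      (∑ᶠ (k : ℤ) (_ : 0 < k), |G.J k|) = ∑ᶠ (k : ℤ) (_ : k < 0), |G.J k| := by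
  classical
  -- `J_k(G) = J_{-k}(G)` for every `k`.
  have hJ : ∀ k : ℤ, G.J k = G.J (-k) := by
    intro k
    rcases eq_or_ne k 0 with rfl | hk
    · norm_num
    obtain ⟨m, hm⟩ := h
    have h1 := GaussDiagram.J_invariant hm k
    have h2 := GaussDiagram.J_zero_of_writhePoly_zero h0 hk
    have h3 := GaussDiagram.J_zero_of_writhePoly_zero h0 (neg_ne_zero.2 hk)
    rw [h2, h3] at h1
    omega
  set f : ℤ → ℤ := fun k => |G.J k| with hf
  -- a symmetric finite set containing the support of `f`
  set s : Finset ℤ :=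
    (Finset.univ.image G.ind) ∪ (Finset.univ.image fun i => -G.ind i) with hs
  have hsupp : ∀ k : ℤ, k ∉ s → f k = 0 := by
    intro k hk
    have : G.J k = 0 := by
      rw [GaussDiagram.J_eq_sum]
      apply Finset.sum_eq_zero
      intro i _
      have : G.ind i ≠ k := by
        intro h'
        exact hk (Finset.mem_union_left _ (Finset.mem_image.2 ⟨i, Finset.mem_univ i, h'⟩))
      simp [this]
    simp [hf, this]
  have hsym : ∀ k : ℤ, k ∈ s → -k ∈ s := by
    intro k hk
    rcases Finset.mem_union.1 hk with hk | hk
    · obtain ⟨i, -, rfl⟩ := Finset.mem_image.1 hk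
      exact Finset.mem_union_right _ (Finset.mem_image.2 ⟨i, Finset.mem_univ i, rfl⟩)
    · obtain ⟨i, -, rfl⟩ := Finset.mem_image.1 hk
      exact Finset.mem_union_left _ (Finset.mem_image.2 ⟨i, Finset.mem_univ i, by simp⟩)
  have e1 : (∑ᶠ (k : ℤ) (_ : k ≠ 0), f k) = ∑ k ∈ s.filter (· ≠ 0), f k := by
    apply finsum_cond_eq_sum_of_cond_iff
    intro x hx
    have hxs : x ∈ s := by by_contra hxs; exact hx (hsupp x hxs)
    simp [hxs]
  have e2 : (∑ᶠ (k : ℤ) (_ : 0 < k), f k) = ∑ k ∈ s.filter (0 < ·), f k := by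
    apply finsum_cond_eq_sum_of_cond_iff
    intro x hx
    have hxs : x ∈ s := by by_contra hxs; exact hx (hsupp x hxs)
    simp [hxs]
  have e3 : (∑ᶠ (k : ℤ) (_ : k < 0), f k) = ∑ k ∈ s.filter (· < 0), f k := by
    apply finsum_cond_eq_sum_of_cond_iff
    intro x hx
    have hxs : x ∈ s := by by_contra hxs; exact hx (hsupp x hxs)
    simp [hxs]
  have hsplit : s.filter (· ≠ 0) = s.filter (0 < ·) ∪ s.filter (· < 0) := by
    ext k
    simp only [Finset.mem_filter, Finset.mem_union]
    constructor
    · rintro ⟨hk, hk0⟩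
      rcases lt_or_gt_of_ne hk0 with h' | h'
      · exact Or.inr ⟨hk, h'⟩
      · exact Or.inl ⟨hk, h'⟩
    · rintro (⟨hk, h'⟩ | ⟨hk, h'⟩) <;> exact ⟨hk, by omega⟩
  have hdisj : Disjoint (s.filter (0 < ·)) (s.filter (· < 0)) := by
    rw [Finset.disjoint_left]
    intro k hk1 hk2
    simp only [Finset.mem_filter] at hk1 hk2
    omega
  have hflip : ∑ k ∈ s.filter (· < 0), f k = ∑ k ∈ s.filter (0 < ·), f k := by
    apply Finset.sum_nbij' (i := fun k => -k) (j := fun k => -k)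
    · intro a ha
      simp only [Finset.mem_filter] at ha ⊢
      exact ⟨hsym a ha.1, by omega⟩
    · intro a ha
      simp only [Finset.mem_filter] at ha ⊢
      exact ⟨hsym a ha.1, by omega⟩
    · intro a _; ring
    · intro a _; ring
    · intro a _
      simp only [hf]
      rw [hJ a]
  have key : ∑ k ∈ s.filter (· ≠ 0), f k
      = ∑ k ∈ s.filter (0 < ·), f k + ∑ k ∈ s.filter (· < 0), f k := by
    rw [hsplit, Finset.sum_union hdisj]
  constructor
  · rw [e1, e2, key, hflip]; ring
  · rw [e2, e3, hflip]
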